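/- Let l, w be positive integers and i ∈ {1,2}. Every mincut Σ of the hammock network H^{(i)}_{l,w} contains exactly one edge having an endpoint on the line y = 0, and exactly one edge having an endpoint on the line y = w. -/

import Mathlib

open scoped Classical

/-- Parity predicate: kind 1 = even points (x+y even), kind 2 = odd points. -/
def HammockPar (i : ℕ) (p : ℤ × ℤ) : Prop :=
  if i = 1 then Even (p.1 + p.2) else Odd (p.1 + p.2)

/-- The set 𝒱_{l,w} of lattice points of the rectangle [0,l] × [0,w]. -/
def HammockVAll (l w : ℕ) : Set (ℤ × ℤ) :=
  {p | 0 ≤ p.1 ∧ p.1 ≤ (l : ℤ) ∧ 0 ≤ p.2 ∧ p.2 ≤ (w : ℤ)}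

/-- The vertex set V^{(i)}_{l,w} of the hammock network of kind `i`. -/
def HammockV (i l w : ℕ) : Set (ℤ × ℤ) :=
  {p | p ∈ HammockVAll l w ∧ HammockPar i p}

/-- The set 𝓔_{l,w} of all diagonal unit edges inside the rectangle. -/
def HammockEAll (l w : ℕ) : Set (Sym2 (ℤ × ℤ)) :=
  {e | ∃ a b : ℤ × ℤ, e = s(a, b) ∧ a ∈ HammockVAll l w ∧ b ∈ HammockVAll l w ∧
      |a.1 - b.1| = 1 ∧ |a.2 - b.2| = 1}

/-- The edge set E^{(i)}_{l,w} of the hammock network of kind `i`. -/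
def HammockE (i l w : ℕ) : Set (Sym2 (ℤ × ℤ)) :=
  {e | e ∈ HammockEAll l w ∧ ∀ p ∈ e, HammockPar i p}

/-- The allowed steps of an X-path. -/
def XStep : Set (ℤ × ℤ) := {(1, 1), (-1, 1), (1, -1), (-1, -1)}

/-- An X-path: a finite sequence of pairwise distinct lattice points, each obtained
from the previous one by a step in `XStep`. -/
def IsXPath (vs : List (ℤ × ℤ)) : Prop :=
  vs.Nodup ∧ vs.Chain' (fun a b => b - a ∈ XStep)

/-- The list of edges of an X-path. -/
def xEdges (vs : List (ℤ × ℤ)) : List (Sym2 (ℤ × ℤ)) :=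
  (vs.zip vs.tail).map fun q => s(q.1, q.2)

/-- A two-terminal network on the diagonal lattice: an edge set together with
a set of source nodes and a set of terminus nodes. -/
structure HNetwork where
  edges : Set (Sym2 (ℤ × ℤ))
  src : Set (ℤ × ℤ)
  tgt : Set (ℤ × ℤ)

/-- `P` is a pathset: `P ⊆ edges` and `P` contains all edges of some X-path
joining a source node to a terminus node. -/
def HNetwork.IsPathset (N : HNetwork) (P : Set (Sym2 (ℤ × ℤ))) : Prop :=
  P ⊆ N.edges ∧ ∃ (vs : List (ℤ × ℤ)) (h : vs ≠ []),
    IsXPath vs ∧ vs.head h ∈ N.src ∧ vs.getLast h ∈ N.tgt ∧ ∀ e ∈ xEdges vs, e ∈ P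

/-- `C` is a cutset: removing `C` leaves no pathset. -/
def HNetwork.IsCutset (N : HNetwork) (C : Set (Sym2 (ℤ × ℤ))) : Prop :=
  C ⊆ N.edges ∧ ¬ N.IsPathset (N.edges \ C)

/-- A minpath: a pathset no proper subset of which is a pathset. -/
def HNetwork.IsMinpath (N : HNetwork) (P : Set (Sym2 (ℤ × ℤ))) : Prop :=
  N.IsPathset P ∧ ∀ Q, Q ⊂ P → ¬ N.IsPathset Q

/-- A mincut: a cutset no proper subset of which is a cutset. -/
def HNetwork.IsMincut (N : HNetwork) (C : Set (Sym2 (ℤ × ℤ))) : Prop :=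
  N.IsCutset C ∧ ∀ D, D ⊂ C → ¬ N.IsCutset D

/-- The hammock network H^{(i)}_{l,w}: sources are its vertices with x = 0,
terminals its vertices with x = l. -/
def hammock (i l w : ℕ) : HNetwork where
  edges := HammockE i l w
  src := {p | p ∈ HammockV i l w ∧ p.1 = 0}
  tgt := {p | p ∈ HammockV i l w ∧ p.1 = (l : ℤ)}

/-- The dual network H̄^{(i)}_{l,w}: vertex set 𝒱 − V^{(i)}, edge set 𝓔 − E^{(i)},
sources the points with y = 0, terminals the points with y = w. -/
def hammockDual (i l w : ℕ) : HNetwork where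
  edges := HammockEAll l w \ HammockE i l w
  src := {p | p ∈ HammockVAll l w \ HammockV i l w ∧ p.2 = 0}
  tgt := {p | p ∈ HammockVAll l w \ HammockV i l w ∧ p.2 = (w : ℤ)}

/-- The complementary edge: ē of e = {(x,y),(x+1,y±1)} is {(x+1,y),(x,y±1)}. -/
def complEdge : Sym2 (ℤ × ℤ) → Sym2 (ℤ × ℤ) :=
  Sym2.lift ⟨fun a b => s((a.1, b.2), (b.1, a.2)), fun _ _ => Sym2.eq_swap⟩

/-- The other kind: 2/1 = 2 and 2/2 = 1. -/
def otherKind (i : ℕ) : ℕ := if i = 1 then 2 else 1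

/-- The edge set E^{(i)}_{l,w} as a finite set. -/
noncomputable def hammockEFinset (i l w : ℕ) : Finset (Sym2 (ℤ × ℤ)) :=
  ((Finset.Icc (0 : ℤ) l) ×ˢ (Finset.Icc (0 : ℤ) w)).sym2.filter (· ∈ HammockE i l w)

/-- The reliability polynomial h^{(i)}_{l,w}(p) = Σ_P p^{|P|} (1-p)^{lw-|P|},
summing over all pathsets P of H^{(i)}_{l,w}. -/
noncomputable def hammockRel (i l w : ℕ) (p : ℝ) : ℝ :=
  ∑ P ∈ (hammockEFinset i l w).powerset.filter (fun P : Finset (Sym2 (ℤ × ℤ)) => (hammock i l w).IsPathset ↑P),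
    p ^ P.card * (1 - p) ^ (l * w - P.card)


abbrev xstep (a b : ℤ × ℤ) : Prop := b - a ∈ XStep

-- ## chunk1


lemma mem_XStep_iff (v : ℤ × ℤ) : v ∈ XStep ↔ |v.1| = 1 ∧ |v.2| = 1 := by
  obtain ⟨a, b⟩ := v
  simp only [XStep, Set.mem_insert_iff, Set.mem_singleton_iff, Prod.mk.injEq]
  constructor
  · rintro (⟨rfl, rfl⟩ | ⟨rfl, rfl⟩ | ⟨rfl, rfl⟩ | ⟨rfl, rfl⟩) <;> norm_num
  · rintro ⟨h1, h2⟩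
    rcases abs_eq (by norm_num : (0:ℤ) ≤ 1) |>.mp h1 with rfl | rfl <;>
      rcases abs_eq (by norm_num : (0:ℤ) ≤ 1) |>.mp h2 with rfl | rfl <;> tauto

lemma xstep_iff (a b : ℤ × ℤ) : xstep a b ↔ |b.1 - a.1| = 1 ∧ |b.2 - a.2| = 1 := by
  rw [xstep, mem_XStep_iff]; rfl

-- zip-with-tail decomposition
lemma mem_zip_tail_iff {α : Type*} (q : α × α) (vs : List α) :
    q ∈ vs.zip vs.tail ↔ ∃ xs ys, vs = xs ++ q.1 :: q.2 :: ys := by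
  induction vs with
  | nil => simp
  | cons v rest ih =>
    cases rest with
    | nil =>
      constructor
      · intro h; simp at h
      · rintro ⟨xs, ys, hxs⟩
        have := congrArg List.length hxs
        simp at this; omega
    | cons u t =>
      simp only [List.tail_cons, List.zip_cons_cons, List.mem_cons]
      constructor
      · rintro (h | h)
        · obtain ⟨rfl, rfl⟩ : v = q.1 ∧ u = q.2 := by
            have := congrArg Prod.fst h; have := congrArg Prod.snd h
            simp_all
          exact ⟨[], t, by simp⟩
        · obtain ⟨xs, ys, hxs⟩ := (ih).mp (by simpa using h)
          exact ⟨v :: xs, ys, by simp [hxs]⟩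
      · rintro ⟨xs, ys, hxs⟩
        cases xs with
        | nil =>
          left; simp at hxs; obtain ⟨h1, h2, _⟩ := hxs; simp [h1, h2]
        | cons x xs' =>
          right
          simp only [List.cons_append, List.cons.injEq] at hxs
          obtain ⟨rfl, hrest⟩ := hxs
          have : q ∈ (u :: t).zip (u :: t).tail := (ih).mpr ⟨xs', ys, by simp [hrest]⟩
          simpa using this

lemma mem_xEdges_iff (e : Sym2 (ℤ × ℤ)) (vs : List (ℤ × ℤ)) :
    e ∈ xEdges vs ↔ ∃ xs x y ys, vs = xs ++ x :: y :: ys ∧ e = s(x, y) := by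
  simp only [xEdges, List.mem_map]
  constructor
  · rintro ⟨q, hq, rfl⟩
    obtain ⟨xs, ys, h⟩ := (mem_zip_tail_iff q vs).mp hq
    exact ⟨xs, q.1, q.2, ys, h, rfl⟩
  · rintro ⟨xs, x, y, ys, h, rfl⟩
    exact ⟨(x, y), (mem_zip_tail_iff (x, y) vs).mpr ⟨xs, ys, h⟩, rfl⟩

-- ## chunk2

@[simp] lemma xEdges_nil : xEdges [] = [] := rfl
@[simp] lemma xEdges_single (v : ℤ × ℤ) : xEdges [v] = [] := rfl
@[simp] lemma xEdges_cons_cons (a b : ℤ × ℤ) (l : List (ℤ × ℤ)) :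
    xEdges (a :: b :: l) = s(a, b) :: xEdges (b :: l) := rfl

lemma mem_xEdges_cons (e : Sym2 (ℤ × ℤ)) (x : ℤ × ℤ) (l : List (ℤ × ℤ))
    (h : e ∈ xEdges l) : e ∈ xEdges (x :: l) := by
  cases l with
  | nil => simp at h
  | cons b t => simp only [xEdges_cons_cons, List.mem_cons]; tauto

lemma xEdges_append_cons (xs : List (ℤ × ℤ)) (a : ℤ × ℤ) (ys : List (ℤ × ℤ)) :
    xEdges (xs ++ a :: ys) = xEdges (xs ++ [a]) ++ xEdges (a :: ys) := by
  induction xs with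
  | nil => simp
  | cons x xs ih =>
    cases xs with
    | nil => cases ys <;> simp
    | cons x' xs' =>
      simp only [List.cons_append, xEdges_cons_cons]
      rw [show x' :: (xs' ++ a :: ys) = x' :: xs' ++ a :: ys by simp, ih]
      simp

lemma xEdges_concat (vs : List (ℤ × ℤ)) (h : vs ≠ []) (q : ℤ × ℤ) :
    xEdges (vs ++ [q]) = xEdges vs ++ [s(vs.getLast h, q)] := by
  induction vs with
  | nil => simp at h
  | cons v rest ih =>
    cases rest with
    | nil => simp
    | cons u t =>
      have h' : u :: t ≠ [] := by simp
      simp only [List.cons_append, xEdges_cons_cons]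
      rw [show u :: (t ++ [q]) = u :: t ++ [q] by simp, ih h', List.getLast_cons h']

lemma mem_of_mem_xEdges {e : Sym2 (ℤ × ℤ)} {vs : List (ℤ × ℤ)} {p : ℤ × ℤ}
    (he : e ∈ xEdges vs) (hp : p ∈ e) : p ∈ vs := by
  induction vs with
  | nil => simp at he
  | cons v rest ih =>
    cases rest with
    | nil => simp at he
    | cons u t =>
      simp only [xEdges_cons_cons, List.mem_cons] at he ⊢
      rcases he with rfl | he
      · rcases Sym2.mem_iff.mp hp with rfl | rfl
        · tauto
        · right; simp
      · right; exact List.mem_cons.mp (ih he)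

lemma xEdges_nodup {vs : List (ℤ × ℤ)} (h : vs.Nodup) : (xEdges vs).Nodup := by
  induction vs with
  | nil => simp
  | cons v rest ih =>
    cases rest with
    | nil => simp
    | cons u t =>
      simp only [xEdges_cons_cons, List.nodup_cons]
      refine ⟨fun hmem => ?_, ih (List.nodup_cons.mp h).2⟩
      have hv : v ∈ u :: t := mem_of_mem_xEdges hmem (by simp)
      exact (List.nodup_cons.mp h).1 hv

-- extraction of a nodup path from a walk
noncomputable def extractP : List (ℤ × ℤ) → List (ℤ × ℤ)
  | [] => []
  | v :: rest =>
    let p := extractP rest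
    if v ∈ p then p.dropWhile (· ≠ v) else v :: p

lemma head?_dropWhile_ne {α : Type*} [DecidableEq α] (p : List α) (v : α) (h : v ∈ p) :
    (p.dropWhile (· ≠ v)).head? = some v := by
  induction p with
  | nil => simp at h
  | cons a t ih =>
    by_cases hav : a = v
    · subst hav; rw [List.dropWhile_cons_of_neg (by simp)]; rfl
    · rw [List.dropWhile_cons_of_pos (by simpa using hav)]
      exact ih (by rcases List.mem_cons.mp h with rfl | h; exact absurd rfl hav; exact h)

lemma extractP_ne_nil {vs : List (ℤ × ℤ)} (h : vs ≠ []) : extractP vs ≠ [] := by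
  cases vs with
  | nil => simp at h
  | cons v rest =>
    simp only [extractP]
    split
    · rename_i hmem
      intro hnil
      rw [← List.head?_eq_none_iff] at hnil
      rw [head?_dropWhile_ne _ _ hmem] at hnil; simp at hnil
    · simp

lemma extractP_head? (vs : List (ℤ × ℤ)) : (extractP vs).head? = vs.head? := by
  cases vs with
  | nil => rfl
  | cons v rest =>
    simp only [extractP]
    split
    · rename_i hmem; rw [head?_dropWhile_ne _ _ hmem]; rfl
    · rfl

lemma getLast?_cons_of_ne_nil' {α : Type*} (v : α) {rest : List α} (h : rest ≠ []) :
    (v :: rest).getLast? = rest.getLast? := by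
  cases rest with
  | nil => simp at h
  | cons a t => exact List.getLast?_cons_cons ..

lemma mem_xEdges_append {e : Sym2 (ℤ × ℤ)} (t s : List (ℤ × ℤ)) (h : e ∈ xEdges s) :
    e ∈ xEdges (t ++ s) := by
  induction t with
  | nil => simpa using h
  | cons x t ih => exact mem_xEdges_cons _ _ _ ih

lemma getLast?_of_suffix {α : Type*} {s l : List α} (h : s <:+ l) (hs : s ≠ []) :
    l.getLast? = s.getLast? := by
  obtain ⟨t, rfl⟩ := h
  rw [List.getLast?_append, List.getLast?_eq_getLast hs]
  simp

lemma extractP_getLast? (vs : List (ℤ × ℤ)) : (extractP vs).getLast? = vs.getLast? := by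
  induction vs with
  | nil => rfl
  | cons v rest ih =>
    simp only [extractP]
    by_cases hrest : rest = []
    · subst hrest; simp [extractP]
    split
    · rename_i hmem
      have hne : (extractP rest).dropWhile (· ≠ v) ≠ [] := by
        intro hnil; rw [← List.head?_eq_none_iff] at hnil
        rw [head?_dropWhile_ne _ _ hmem] at hnil; simp at hnil
      rw [← getLast?_of_suffix (List.dropWhile_suffix _) hne, ih,
        getLast?_cons_of_ne_nil' _ hrest]
    · rename_i hmem
      have hne : extractP rest ≠ [] := extractP_ne_nil hrest
      rw [getLast?_cons_of_ne_nil' _ hne, ih, getLast?_cons_of_ne_nil' _ hrest]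

lemma extractP_nodup (vs : List (ℤ × ℤ)) : (extractP vs).Nodup := by
  induction vs with
  | nil => simp [extractP]
  | cons v rest ih =>
    simp only [extractP]
    split
    · exact ((List.dropWhile_suffix _).sublist).nodup ih
    · rename_i hmem; exact List.nodup_cons.mpr ⟨hmem, ih⟩

lemma extractP_chain' {R : ℤ × ℤ → ℤ × ℤ → Prop} {vs : List (ℤ × ℤ)}
    (h : vs.Chain' R) : (extractP vs).Chain' R := by
  induction vs with
  | nil => simp [extractP, List.Chain']
  | cons v rest ih =>
    have hrest : rest.Chain' R := (List.isChain_cons.mp h).2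
    simp only [extractP]
    split
    · exact (ih hrest).suffix (List.dropWhile_suffix _)
    · refine List.isChain_cons.mpr ⟨?_, ih hrest⟩
      intro y hy
      rw [extractP_head? rest] at hy
      exact (List.isChain_cons.mp h).1 y hy

lemma extractP_edges_subset {vs : List (ℤ × ℤ)} {e : Sym2 (ℤ × ℤ)}
    (he : e ∈ xEdges (extractP vs)) : e ∈ xEdges vs := by
  induction vs with
  | nil => simp [extractP] at he
  | cons v rest ih =>
    simp only [extractP] at he
    split at he
    · rename_i hmem
      have : e ∈ xEdges (extractP rest) := by
        obtain ⟨t, ht⟩ := List.dropWhile_suffix (l := extractP rest) (· ≠ v)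
        rw [← ht]
        exact mem_xEdges_append _ _ he
      exact mem_xEdges_cons _ _ _ (ih this)
    · rename_i hmem
      rcases hd : extractP rest with _ | ⟨b, d'⟩
      · rw [hd] at he; simp at he
      · rw [hd] at he
        rcases List.mem_cons.mp (by simpa using he) with rfl | he'
        · -- e = s(v, b); b = head of extractP rest = head of rest
          have hb : rest.head? = some b := by rw [← extractP_head? rest, hd]; rfl
          cases rest with
          | nil => simp at hb
          | cons u t =>
            have : u = b := by simpa using hb
            subst this
            simp
        · rw [← hd] at he'
          exact mem_xEdges_cons _ _ _ (ih he')

-- ## chunk3 : edge lemmas and reachability sets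

lemma edge_mem_E_iff (i l w : ℕ) (a b : ℤ × ℤ) :
    s(a, b) ∈ HammockE i l w ↔
      a ∈ HammockVAll l w ∧ b ∈ HammockVAll l w ∧ |a.1 - b.1| = 1 ∧ |a.2 - b.2| = 1 ∧
        HammockPar i a ∧ HammockPar i b := by
  constructor
  · rintro ⟨⟨a', b', heq, ha', hb', hd1, hd2⟩, hpar⟩
    have hpa : HammockPar i a := hpar a (Sym2.mem_mk_left a b)
    have hpb : HammockPar i b := hpar b (Sym2.mem_mk_right a b)
    rcases Sym2.eq_iff.mp heq with ⟨rfl, rfl⟩ | ⟨rfl, rfl⟩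
    · exact ⟨ha', hb', hd1, hd2, hpa, hpb⟩
    · exact ⟨hb', ha', by rwa [abs_sub_comm], by rwa [abs_sub_comm], hpa, hpb⟩
  · rintro ⟨ha, hb, hd1, hd2, hpa, hpb⟩
    exact ⟨⟨a, b, rfl, ha, hb, hd1, hd2⟩, fun p hp => by
      rcases Sym2.mem_iff.mp hp with rfl | rfl <;> assumption⟩

lemma edge_endpoint_V {i l w : ℕ} {e : Sym2 (ℤ × ℤ)} (he : e ∈ HammockE i l w)
    {p : ℤ × ℤ} (hp : p ∈ e) : p ∈ HammockV i l w := by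
  obtain ⟨⟨a, b, rfl, ha, hb, _, _⟩, hpar⟩ := he
  refine ⟨?_, hpar p hp⟩
  rcases Sym2.mem_iff.mp hp with rfl | rfl <;> assumption

lemma edge_xstep {i l w : ℕ} {a b : ℤ × ℤ} (h : s(a, b) ∈ HammockE i l w) : xstep a b := by
  have := (edge_mem_E_iff i l w a b).mp h
  rw [xstep_iff]
  exact ⟨by rw [abs_sub_comm]; exact this.2.2.1, by rw [abs_sub_comm]; exact this.2.2.2.1⟩

/-- Points reachable from a source by an X-walk avoiding `S`. -/
def InA (i l w : ℕ) (S : Set (Sym2 (ℤ × ℤ))) (p : ℤ × ℤ) : Prop :=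
  ∃ (vs : List (ℤ × ℤ)) (h : vs ≠ []),
    vs.Chain' xstep ∧ vs.head h ∈ (hammock i l w).src ∧ vs.getLast h = p ∧
    ∀ e ∈ xEdges vs, e ∈ HammockE i l w \ S

/-- Points from which a target is reachable by an X-walk avoiding `S`. -/
def InB (i l w : ℕ) (S : Set (Sym2 (ℤ × ℤ))) (p : ℤ × ℤ) : Prop :=
  ∃ (vs : List (ℤ × ℤ)) (h : vs ≠ []),
    vs.Chain' xstep ∧ vs.head h = p ∧ vs.getLast h ∈ (hammock i l w).tgt ∧
    ∀ e ∈ xEdges vs, e ∈ HammockE i l w \ S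

lemma InA_src {i l w : ℕ} {S : Set (Sym2 (ℤ × ℤ))} {p : ℤ × ℤ}
    (hp : p ∈ (hammock i l w).src) : InA i l w S p :=
  ⟨[p], by simp, by simp [List.Chain'], by simpa using hp, by simp, by simp⟩

lemma InB_tgt {i l w : ℕ} {S : Set (Sym2 (ℤ × ℤ))} {p : ℤ × ℤ}
    (hp : p ∈ (hammock i l w).tgt) : InB i l w S p :=
  ⟨[p], by simp, by simp [List.Chain'], by simp, by simpa using hp, by simp⟩

lemma InA_extend {i l w : ℕ} {S : Set (Sym2 (ℤ × ℤ))} {p q : ℤ × ℤ}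
    (h : InA i l w S p) (he : s(p, q) ∈ HammockE i l w \ S) : InA i l w S q := by
  obtain ⟨vs, hne, hc, hhd, hlast, hedges⟩ := h
  refine ⟨vs ++ [q], by simp, ?_, ?_, ?_, ?_⟩
  · refine List.isChain_append.mpr ?_
    refine ⟨hc, by simp, ?_⟩
    intro x hx y hy
    rw [List.getLast?_eq_getLast hne] at hx
    simp only [Option.mem_def, Option.some.injEq] at hx
    simp only [List.head?_cons, Option.mem_def, Option.some.injEq] at hy
    subst hx; subst hy
    rw [hlast]
    exact edge_xstep he.1
  · rw [List.head_append]
    simp only [List.isEmpty_iff]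
    rw [dif_neg hne]
    exact hhd
  · rw [List.getLast_append]
    simp
  · rw [xEdges_concat vs hne q]
    intro e hme
    rcases List.mem_append.mp hme with h1 | h1
    · exact hedges e h1
    · simp only [List.mem_singleton] at h1
      subst h1; rw [hlast]; exact he

lemma InB_extend {i l w : ℕ} {S : Set (Sym2 (ℤ × ℤ))} {p q : ℤ × ℤ}
    (h : InB i l w S q) (he : s(p, q) ∈ HammockE i l w \ S) : InB i l w S p := by
  obtain ⟨vs, hne, hc, hhd, hlast, hedges⟩ := h
  refine ⟨p :: vs, by simp, ?_, by simp, ?_, ?_⟩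
  · refine List.isChain_cons.mpr ⟨?_, hc⟩
    intro y hy
    rw [List.head?_eq_head hne] at hy
    simp only [Option.mem_def, Option.some.injEq] at hy
    subst hy; rw [hhd]
    exact edge_xstep he.1
  · rw [List.getLast_cons hne]; exact hlast
  · intro e hme
    cases vs with
    | nil => simp at hne
    | cons u t =>
      rcases List.mem_cons.mp (by simpa using hme) with rfl | h1
      · have : u = q := by simpa using hhd
        subst this; exact he
      · exact hedges e h1

lemma walk_pathset {i l w : ℕ} {S : Set (Sym2 (ℤ × ℤ))} {vs : List (ℤ × ℤ)} (hne : vs ≠ [])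
    (hc : vs.Chain' xstep) (hhd : vs.head hne ∈ (hammock i l w).src)
    (hlast : vs.getLast hne ∈ (hammock i l w).tgt)
    (hedges : ∀ e ∈ xEdges vs, e ∈ HammockE i l w \ S) :
    (hammock i l w).IsPathset (HammockE i l w \ S) := by
  have hne' : extractP vs ≠ [] := extractP_ne_nil hne
  refine ⟨Set.diff_subset, extractP vs, hne', ⟨extractP_nodup vs, extractP_chain' hc⟩, ?_, ?_, ?_⟩
  · have h1 : (extractP vs).head? = vs.head? := extractP_head? vs
    rw [List.head?_eq_head hne', List.head?_eq_head hne] at h1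
    simp only [Option.some.injEq] at h1
    rwa [h1]
  · have h1 : (extractP vs).getLast? = vs.getLast? := extractP_getLast? vs
    rw [List.getLast?_eq_getLast hne', List.getLast?_eq_getLast hne] at h1
    simp only [Option.some.injEq] at h1
    rwa [h1]
  · exact fun e hme => hedges e (extractP_edges_subset hme)

lemma AB_disjoint {i l w : ℕ} {S : Set (Sym2 (ℤ × ℤ))}
    (hcut : ¬ (hammock i l w).IsPathset (HammockE i l w \ S)) {p : ℤ × ℤ}
    (hA : InA i l w S p) (hB : InB i l w S p) : False := by
  obtain ⟨as, ha, hca, hhda, hlasta, hea⟩ := hA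
  obtain ⟨bs, hb, hcb, hhdb, hlastb, heb⟩ := hB
  have hdecomp : as.dropLast ++ [p] = as := by
    rw [← hlasta]; exact List.dropLast_append_getLast ha
  set ys := as.dropLast with hys
  have hcombne : ys ++ bs ≠ [] := by simp [hb]
  apply hcut
  apply walk_pathset hcombne _ _ _ _
  · -- chain'
    refine List.isChain_append.mpr ?_
    refine ⟨hca.prefix ⟨[p], hdecomp⟩, hcb, ?_⟩
    intro x hx y hy
    rw [List.head?_eq_head hb] at hy
    simp only [Option.mem_def, Option.some.injEq] at hy
    subst hy; rw [hhdb]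
    -- x is the last of ys; use chain' of as = ys ++ [p]
    rw [← hdecomp] at hca
    have := (List.isChain_append.mp hca).2.2 x hx p (by simp)
    exact this
  · -- head ∈ src
    have h1 : (ys ++ bs).head? = as.head? := by
      conv_rhs => rw [← hdecomp]
      rw [List.head?_append, List.head?_append]
      cases hys0 : ys.head? with
      | none => simp [List.head?_eq_head hb, hhdb]
      | some a => simp
    rw [List.head?_eq_head hcombne, List.head?_eq_head ha] at h1
    rw [Option.some.inj h1]
    exact hhda
  · rw [List.getLast_append]
    rw [dif_neg (by simpa using hb)]
    exact hlastb
  · intro e hme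
    have hbs_decomp : p :: bs.tail = bs := by
      rw [← hhdb]; exact List.cons_head_tail hb
    rw [← hbs_decomp, xEdges_append_cons] at hme
    rcases List.mem_append.mp hme with h1 | h1
    · rw [hdecomp] at h1; exact hea e h1
    · rw [hbs_decomp] at h1; exact heb e h1

-- ## chunk4 : every mincut edge spans A and B; vertex facts

lemma mincut_pathset_insert {i l w : ℕ} {S : Set (Sym2 (ℤ × ℤ))}
    (hS : (hammock i l w).IsMincut S) {e : Sym2 (ℤ × ℤ)} (he : e ∈ S) :
    (hammock i l w).IsPathset (insert e (HammockE i l w \ S)) := by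
  obtain ⟨⟨hsub, hnp⟩, hmin⟩ := hS
  have hssub : S \ {e} ⊂ S := by
    constructor
    · exact Set.diff_subset
    · intro hsub'
      have := hsub' he
      simp at this
  have := hmin _ hssub
  rw [HNetwork.IsCutset] at this
  push_neg at this
  have h2 := this (fun x hx => hsub hx.1)
  have heq : (hammock i l w).edges \ (S \ {e}) = insert e (HammockE i l w \ S) := by
    ext x
    simp only [hammock, Set.mem_diff, Set.mem_insert_iff, Set.mem_diff, Set.mem_singleton_iff]
    constructor
    · rintro ⟨hxE, hx⟩
      by_cases hxe : x = e
      · exact Or.inl hxe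
      · exact Or.inr ⟨hxE, fun hxS => hx ⟨hxS, hxe⟩⟩
    · rintro (rfl | ⟨hxE, hxS⟩)
      · exact ⟨hsub he, fun hx => hx.2 rfl⟩
      · exact ⟨hxE, fun hx => hxS hx.1⟩
  rwa [heq] at h2

lemma span_of_mincut {i l w : ℕ} {S : Set (Sym2 (ℤ × ℤ))}
    (hS : (hammock i l w).IsMincut S) {e : Sym2 (ℤ × ℤ)} (he : e ∈ S) :
    ∃ x y : ℤ × ℤ, e = s(x, y) ∧ InA i l w S x ∧ InB i l w S y := by
  have hcut : ¬ (hammock i l w).IsPathset (HammockE i l w \ S) := by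
    have := hS.1.2
    simpa [hammock] using this
  obtain ⟨hPsub, vs, hne, ⟨hnodup, hchain⟩, hhd, hlast, hedges⟩ := mincut_pathset_insert hS he
  -- e must be among the edges of vs
  by_cases heuse : e ∈ xEdges vs
  · obtain ⟨xs, x, y, ys, hvs, rfl⟩ := (mem_xEdges_iff _ _).mp heuse
    refine ⟨x, y, rfl, ?_, ?_⟩
    · -- prefix walk xs ++ [x]
      have hassoc : vs = (xs ++ [x]) ++ y :: ys := by rw [hvs]; simp
      have hpne : xs ++ [x] ≠ [] := by simp
      have hnodupE : (xEdges vs).Nodup := xEdges_nodup hnodup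
      have hsplit : xEdges vs = xEdges (xs ++ [x]) ++ xEdges (x :: y :: ys) := by
        rw [hvs]; exact xEdges_append_cons xs x (y :: ys)
      refine ⟨xs ++ [x], hpne, ?_, ?_, by simp, ?_⟩
      · exact hchain.prefix ⟨y :: ys, hassoc.symm⟩
      · have h1 : (xs ++ [x]).head? = vs.head? := by
          rw [hassoc, List.head?_append, List.head?_append]
          cases xs <;> simp
        rw [List.head?_eq_head hpne, List.head?_eq_head hne] at h1
        rw [Option.some.inj h1]; exact hhd
      · intro e' he'
        have he'vs : e' ∈ xEdges vs := by rw [hsplit]; exact List.mem_append_left _ he'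
        have hne' : e' ≠ s(x, y) := by
          intro h
          subst h
          rw [hsplit] at hnodupE
          have hdisj := (List.nodup_append'.mp hnodupE).2.2
          exact hdisj he' (by simp)
        rcases hedges e' he'vs with h1 | h1
        · exact absurd h1 hne'
        · exact h1
    · -- suffix walk y :: ys
      have hassoc : vs = (xs ++ [x]) ++ y :: ys := by rw [hvs]; simp
      have hsne : (y :: ys : List (ℤ × ℤ)) ≠ [] := by simp
      have hnodupE : (xEdges vs).Nodup := xEdges_nodup hnodup
      have hsplit : xEdges vs = xEdges (xs ++ [x]) ++ xEdges (x :: y :: ys) := by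
        rw [hvs]; exact xEdges_append_cons xs x (y :: ys)
      refine ⟨y :: ys, hsne, ?_, by simp, ?_, ?_⟩
      · exact hchain.suffix ⟨xs ++ [x], hassoc.symm⟩
      · have h1 : (y :: ys).getLast? = vs.getLast? := by
          rw [hassoc, List.getLast?_append, List.getLast?_eq_getLast hsne]
          simp
        rw [List.getLast?_eq_getLast hsne, List.getLast?_eq_getLast hne] at h1
        rw [Option.some.inj h1]; exact hlast
      · intro e' he'
        have he'vs : e' ∈ xEdges vs := by
          rw [hsplit]
          exact List.mem_append_right _ (mem_xEdges_cons _ _ _ he')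
        have hne' : e' ≠ s(x, y) := by
          intro h
          subst h
          rw [hsplit] at hnodupE
          have h2 := (List.nodup_append.mp hnodupE).2.1
          rw [show xEdges (x :: y :: ys) = s(x,y) :: xEdges (y :: ys) from rfl] at h2
          exact (List.nodup_cons.mp h2).1 he'
        rcases hedges e' he'vs with h1 | h1
        · exact absurd h1 hne'
        · exact h1
  · exfalso
    apply hcut
    apply walk_pathset hne hchain hhd hlast
    intro e' he'
    rcases hedges e' he' with h1 | h1
    · exact absurd (h1 ▸ he') heuse
    · exact h1

lemma first_edge_mem (v : ℤ × ℤ) (t : List (ℤ × ℤ)) (htne : t ≠ []) :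
    s(v, t.head htne) ∈ xEdges (v :: t) :=
  (mem_xEdges_iff _ _).mpr ⟨[], v, t.head htne, t.tail, by simp, rfl⟩

lemma walk_all_InA {i l w : ℕ} {S : Set (Sym2 (ℤ × ℤ))} (vs : List (ℤ × ℤ)) :
    ∀ (hne : vs ≠ []), vs.Chain' xstep → vs.head hne ∈ (hammock i l w).src →
    (∀ e ∈ xEdges vs, e ∈ HammockE i l w \ S) →
    ∀ v ∈ vs, InA i l w S v := by
  induction vs using List.reverseRecOn with
  | nil => intro hne; simp at hne
  | append_singleton ys q ih =>
    intro hne hc hhd hedges v hv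
    have key : ys ≠ [] → (∀ v ∈ ys, InA i l w S v) := by
      intro hyne
      refine ih hyne (hc.prefix ⟨[q], rfl⟩) ?_ ?_
      · have h1 : ys.head? = (ys ++ [q]).head? := by
          rw [List.head?_append, List.head?_eq_head hyne]; simp
        rw [List.head?_eq_head hyne, List.head?_eq_head hne] at h1
        rw [Option.some.inj h1]; exact hhd
      · intro e he
        exact hedges e (by rw [xEdges_concat ys hyne q]; exact List.mem_append_left _ he)
    rcases List.mem_append.mp hv with hvy | hvq
    · exact key (by rintro rfl; simp at hvy) v hvy
    · simp only [List.mem_singleton] at hvq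
      subst hvq
      by_cases hyne : ys = []
      · subst hyne
        exact InA_src (by simpa using hhd)
      · have hlastA : InA i l w S (ys.getLast hyne) := key hyne _ (List.getLast_mem hyne)
        refine InA_extend hlastA ?_
        exact hedges _ (by rw [xEdges_concat ys hyne v]; exact List.mem_append_right _ (by simp))

lemma walk_all_InB {i l w : ℕ} {S : Set (Sym2 (ℤ × ℤ))} (vs : List (ℤ × ℤ)) :
    ∀ (hne : vs ≠ []), vs.Chain' xstep → vs.getLast hne ∈ (hammock i l w).tgt →
    (∀ e ∈ xEdges vs, e ∈ HammockE i l w \ S) →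
    ∀ v ∈ vs, InB i l w S v := by
  induction vs with
  | nil => intro hne; simp at hne
  | cons u t ih =>
    intro hne hc hlast hedges v hv
    by_cases htne : t = []
    · subst htne
      simp only [List.mem_singleton] at hv
      subst hv
      exact InB_tgt (by simpa using hlast)
    · have hrec : ∀ v ∈ t, InB i l w S v := by
        refine ih htne ((List.isChain_cons.mp hc).2) ?_ ?_
        · have h : (u :: t).getLast hne = t.getLast htne := List.getLast_cons htne
          rwa [h] at hlast
        · intro e he
          exact hedges e (mem_xEdges_cons e u t he)
      rcases List.mem_cons.mp hv with hvu | hvt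
      · subst hvu
        have hheadB : InB i l w S (t.head htne) := hrec _ (List.head_mem htne)
        exact InB_extend hheadB (hedges _ (first_edge_mem v t htne))
      · exact hrec v hvt

lemma walk_mem_V_of_head {i l w : ℕ} (vs : List (ℤ × ℤ)) :
    ∀ (hne : vs ≠ []), vs.head hne ∈ HammockV i l w →
    (∀ e ∈ xEdges vs, e ∈ HammockE i l w) →
    ∀ v ∈ vs, v ∈ HammockV i l w := by
  induction vs with
  | nil => intro hne; simp at hne
  | cons u t ih =>
    intro hne hhd hedges v hv
    rcases List.mem_cons.mp hv with hvu | hvt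
    · subst hvu; simpa using hhd
    · have htne : t ≠ [] := by rintro rfl; simp at hvt
      refine ih htne ?_ (fun e he => hedges e (mem_xEdges_cons e u t he)) v hvt
      have hedge : s(u, t.head htne) ∈ HammockE i l w := hedges _ (first_edge_mem u t htne)
      exact edge_endpoint_V hedge (by simp)

lemma walk_mem_V_of_last {i l w : ℕ} (vs : List (ℤ × ℤ)) :
    ∀ (hne : vs ≠ []), vs.getLast hne ∈ HammockV i l w →
    (∀ e ∈ xEdges vs, e ∈ HammockE i l w) →
    ∀ v ∈ vs, v ∈ HammockV i l w := by
  induction vs with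
  | nil => intro hne; simp at hne
  | cons u t ih =>
    intro hne hlast hedges v hv
    by_cases htne : t = []
    · subst htne
      simp only [List.mem_singleton] at hv
      subst hv
      simpa using hlast
    · have hrec : ∀ v ∈ t, v ∈ HammockV i l w := by
        refine ih htne ?_ (fun e he => hedges e (mem_xEdges_cons e u t he))
        have h : (u :: t).getLast hne = t.getLast htne := List.getLast_cons htne
        rwa [h] at hlast
      rcases List.mem_cons.mp hv with hvu | hvt
      · subst hvu
        exact edge_endpoint_V (hedges _ (first_edge_mem v t htne)) (by simp)
      · exact hrec v hvt

lemma InA_mem_V {i l w : ℕ} {S : Set (Sym2 (ℤ × ℤ))} {p : ℤ × ℤ}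
    (h : InA i l w S p) : p ∈ HammockV i l w := by
  obtain ⟨vs, hne, hc, hhd, hlast, hedges⟩ := h
  have hall := walk_mem_V_of_head vs hne (by
    have h2 : (hammock i l w).src ⊆ HammockV i l w := fun q hq => hq.1
    exact h2 hhd) (fun e he => (hedges e he).1)
  rw [← hlast]
  exact hall _ (List.getLast_mem hne)

lemma InB_mem_V {i l w : ℕ} {S : Set (Sym2 (ℤ × ℤ))} {p : ℤ × ℤ}
    (h : InB i l w S p) : p ∈ HammockV i l w := by
  obtain ⟨vs, hne, hc, hhd, hlast, hedges⟩ := h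
  have hall := walk_mem_V_of_last vs hne (by
    have h2 : (hammock i l w).tgt ⊆ HammockV i l w := fun q hq => hq.1
    exact h2 hlast) (fun e he => (hedges e he).1)
  rw [← hhd]
  exact hall _ (List.head_mem hne)

lemma walk_all_InA' {i l w : ℕ} {S : Set (Sym2 (ℤ × ℤ))} {p : ℤ × ℤ} (h : InA i l w S p) :
    ∃ (vs : List (ℤ × ℤ)) (hne : vs ≠ []),
      vs.Chain' xstep ∧ vs.head hne ∈ (hammock i l w).src ∧ vs.getLast hne = p ∧
      (∀ v ∈ vs, InA i l w S v) := by
  obtain ⟨vs, hne, hc, hhd, hlast, hedges⟩ := h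
  exact ⟨vs, hne, hc, hhd, hlast, walk_all_InA vs hne hc hhd hedges⟩

lemma walk_all_InB' {i l w : ℕ} {S : Set (Sym2 (ℤ × ℤ))} {p : ℤ × ℤ} (h : InB i l w S p) :
    ∃ (vs : List (ℤ × ℤ)) (hne : vs ≠ []),
      vs.Chain' xstep ∧ vs.head hne = p ∧ vs.getLast hne ∈ (hammock i l w).tgt ∧
      (∀ v ∈ vs, InB i l w S v) := by
  obtain ⟨vs, hne, hc, hhd, hlast, hedges⟩ := h
  exact ⟨vs, hne, hc, hhd, hlast, walk_all_InB vs hne hc hlast hedges⟩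

-- ## chunk5 : the discrete Jordan curve parity argument

noncomputable def indZ (P : Prop) : ZMod 2 := if P then 1 else 0

lemma indZ_of_not {P : Prop} (h : ¬ P) : indZ P = 0 := if_neg h
lemma indZ_of {P : Prop} (h : P) : indZ P = 1 := if_pos h

lemma indZ_pair {P Q R T : Prop} (h : (P ↔ Q) ↔ (R ↔ T)) :
    indZ P + indZ Q = indZ R + indZ T := by
  by_cases hP : P <;> by_cases hQ : Q <;> by_cases hR : R <;> by_cases hT : T <;>
    simp only [indZ, if_pos, if_neg, *] <;>
    first
      | rfl
      | (exfalso; tauto)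
      | decide

lemma indZ_split {P R T : Prop} (h : P ↔ ¬(R ↔ T)) :
    indZ P = indZ R + indZ T := by
  by_cases hP : P <;> by_cases hR : R <;> by_cases hT : T <;>
    simp only [indZ, if_pos, if_neg, *] <;>
    first
      | rfl
      | (exfalso; tauto)
      | decide

noncomputable def crossZ (p u v : ℤ × ℤ) : ZMod 2 :=
  indZ (min u.1 v.1 = p.1 ∧ u.2 + v.2 < 2 * p.2)

noncomputable def phiZ (p q u : ℤ × ℤ) : ZMod 2 :=
  indZ (u.1 = max p.1 q.1 ∧ u.2 < min p.2 q.2)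

noncomputable def FZ (p : ℤ × ℤ) (bs : List (ℤ × ℤ)) : ZMod 2 :=
  ((bs.zip bs.tail).map (fun z => crossZ p z.1 z.2)).sum

@[simp] lemma FZ_nil (p : ℤ × ℤ) : FZ p [] = 0 := rfl
@[simp] lemma FZ_single (p x : ℤ × ℤ) : FZ p [x] = 0 := rfl
lemma FZ_cons_cons (p x y : ℤ × ℤ) (t : List (ℤ × ℤ)) :
    FZ p (x :: y :: t) = crossZ p x y + FZ p (y :: t) := by
  simp [FZ]

set_option maxHeartbeats 1600000 in
/-- The key local lemma: the change of the crossing indicator between two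
step-adjacent observation points, for one step of the barrier walk. -/
lemma key_parity (c : ℤ) (p q u v : ℤ × ℤ)
    (hpq : xstep p q) (huv : xstep u v)
    (hp : (p.1 + p.2) % 2 = c) (hq : (q.1 + q.2) % 2 = c)
    (hu : (u.1 + u.2) % 2 = c) (hv : (v.1 + v.2) % 2 = c)
    (hup : u ≠ p) (huq : u ≠ q) (hvp : v ≠ p) (hvq : v ≠ q) :
    crossZ p u v + crossZ q u v = phiZ p q u + phiZ p q v := by
  apply indZ_pair
  obtain ⟨p1, p2⟩ := p; obtain ⟨q1, q2⟩ := q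
  obtain ⟨u1, u2⟩ := u; obtain ⟨v1, v2⟩ := v
  rw [xstep_iff] at hpq huv
  simp only [Prod.mk.injEq, not_and_or, ne_eq] at *
  have h1 := hpq.1; have h2 := hpq.2; have h3 := huv.1; have h4 := huv.2
  have hup' : ¬(u1 = p1) ∨ ¬(u2 = p2) := by tauto
  have huq' : ¬(u1 = q1) ∨ ¬(u2 = q2) := by tauto
  have hvp' : ¬(v1 = p1) ∨ ¬(v2 = p2) := by tauto
  have hvq' : ¬(v1 = q1) ∨ ¬(v2 = q2) := by tauto
  rw [abs_eq (by norm_num : (0:ℤ) ≤ 1)] at h1 h2 h3 h4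
  clear hpq huv hup huq hvp hvq
  rcases h1 with h1 | h1 <;> rcases h2 with h2 | h2 <;>
    rcases h3 with h3 | h3 <;> rcases h4 with h4 | h4 <;>
  omega

lemma FZ_key (c : ℤ) (p q : ℤ × ℤ) (hpq : xstep p q)
    (hp : (p.1 + p.2) % 2 = c) (hq : (q.1 + q.2) % 2 = c) :
    ∀ (bs : List (ℤ × ℤ)) (hb : bs ≠ []), bs.Chain' xstep →
      (∀ x ∈ bs, (x.1 + x.2) % 2 = c ∧ x ≠ p ∧ x ≠ q) →
      FZ p bs + FZ q bs = phiZ p q (bs.head hb) + phiZ p q (bs.getLast hb) := by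
  intro bs
  induction bs with
  | nil => intro hb; simp at hb
  | cons x t ih =>
    intro hb hc hall
    cases t with
    | nil =>
      simp only [FZ_single, List.head_cons, List.getLast_singleton]
      rw [add_zero]
      exact (CharTwo.add_self_eq_zero _).symm
    | cons y t' =>
      have htne : (y :: t' : List (ℤ × ℤ)) ≠ [] := by simp
      have hxy : xstep x y := (List.isChain_cons.mp hc).1 y (by simp)
      have hkey := key_parity c p q x y hpq hxy hp hq
        (hall x (by simp)).1 (hall y (by simp)).1
        (hall x (by simp)).2.1 (hall x (by simp)).2.2
        (hall y (by simp)).2.1 (hall y (by simp)).2.2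
      have hih := ih htne ((List.isChain_cons.mp hc).2)
        (fun z hz => hall z (List.mem_cons_of_mem _ hz))
      rw [FZ_cons_cons, FZ_cons_cons]
      have hhead : (y :: t').head htne = y := rfl
      have hlast : (x :: y :: t').getLast hb = (y :: t').getLast htne := List.getLast_cons htne
      rw [hlast]
      rw [hhead] at hih
      have : ∀ a b a' b' s u r : ZMod 2, a + a' = s + u → b + b' = u + r →
          (a + b) + (a' + b') = s + r := by decide
      exact this _ _ _ _ _ _ _ hkey hih

lemma FZ_eq_zero (t : ℤ × ℤ) (bs : List (ℤ × ℤ))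
    (h : ∀ z ∈ bs.zip bs.tail, crossZ t z.1 z.2 = 0) : FZ t bs = 0 := by
  rw [FZ]
  apply List.sum_eq_zero
  intro x hx
  obtain ⟨z, hz, rfl⟩ := List.mem_map.mp hx
  exact h z hz

lemma zip_tail_mem {z : (ℤ × ℤ) × (ℤ × ℤ)} {bs : List (ℤ × ℤ)}
    (hz : z ∈ bs.zip bs.tail) (hc : bs.Chain' xstep) :
    z.1 ∈ bs ∧ z.2 ∈ bs ∧ xstep z.1 z.2 := by
  obtain ⟨xs, ys, rfl⟩ := (mem_zip_tail_iff z bs).mp hz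
  refine ⟨by simp, by simp, ?_⟩
  have := hc.suffix ⟨xs, rfl⟩
  exact (List.isChain_cons.mp this).1 z.2 (by simp)

/-- The discrete Jordan separation lemma. -/
lemma jordan (c : ℤ) (as bs : List (ℤ × ℤ)) (ha : as ≠ []) (hb : bs ≠ [])
    (hca : as.Chain' xstep) (hcb : bs.Chain' xstep)
    (hpa : ∀ v ∈ as, (v.1 + v.2) % 2 = c) (hpb : ∀ v ∈ bs, (v.1 + v.2) % 2 = c)
    (hya : ∀ v ∈ as, 0 ≤ v.2) (hyb : ∀ v ∈ bs, 0 ≤ v.2)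
    (hdisj : ∀ v ∈ as, ∀ u ∈ bs, v ≠ u)
    (hxlow : ∀ u ∈ bs, (as.head ha).1 < u.1)
    (hxhigh : ∀ v ∈ as, v.1 < (bs.getLast hb).1)
    (hs : (bs.head hb).2 = 0 ∨ (bs.head hb).2 = 1)
    (ht : (as.getLast ha).2 = 0 ∨ (as.getLast ha).2 = 1)
    (hst : (bs.head hb).1 < (as.getLast ha).1) : False := by
  set s0 := bs.head hb with hs0
  -- G-invariance along as
  have hGstep : ∀ p q : ℤ × ℤ, p ∈ as → q ∈ as → xstep p q →
      FZ p bs + indZ (s0.1 ≤ p.1) = FZ q bs + indZ (s0.1 ≤ q.1) := by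
    intro p q hpm hqm hpq
    have hkey := FZ_key c p q hpq (hpa p hpm) (hpa q hqm) bs hb hcb
      (fun x hx => ⟨hpb x hx, fun hxp => hdisj p hpm x hx hxp.symm,
        fun hxq => hdisj q hqm x hx hxq.symm⟩)
    have hlast0 : phiZ p q (bs.getLast hb) = 0 := by
      apply indZ_of_not
      rintro ⟨h1, -⟩
      have h2 := hxhigh p hpm
      have h3 := hxhigh q hqm
      rw [h1] at *
      omega
    rw [hlast0, add_zero] at hkey
    have hphi : phiZ p q s0 = indZ (s0.1 ≤ p.1) + indZ (s0.1 ≤ q.1) := by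
      apply indZ_split
      have hsp : s0 ≠ p := fun h => hdisj p hpm s0 (List.head_mem hb) h.symm
      have hsq : s0 ≠ q := fun h => hdisj q hqm s0 (List.head_mem hb) h.symm
      have hps : (p.1 + p.2) % 2 = c := hpa p hpm
      have hqs : (q.1 + q.2) % 2 = c := hpa q hqm
      have hss : (s0.1 + s0.2) % 2 = c := hpb s0 (List.head_mem hb)
      have hpy : 0 ≤ p.2 := hya p hpm
      have hqy : 0 ≤ q.2 := hya q hqm
      obtain ⟨p1, p2⟩ := p; obtain ⟨q1, q2⟩ := q
      rw [xstep_iff] at hpq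
      have h1 := hpq.1; have h2 := hpq.2
      rw [abs_eq (by norm_num : (0:ℤ) ≤ 1)] at h1 h2
      have hsp' : ¬(s0.1 = p1) ∨ ¬(s0.2 = p2) := by
        rcases Decidable.em (s0.1 = p1) with h | h
        · right; intro h2'; exact hsp (Prod.ext h h2')
        · left; exact h
      have hsq' : ¬(s0.1 = q1) ∨ ¬(s0.2 = q2) := by
        rcases Decidable.em (s0.1 = q1) with h | h
        · right; intro h2'; exact hsq (Prod.ext h h2')
        · left; exact h
      simp only []
      omega
    -- combine: FZ p + FZ q = ind p + ind q  hence  FZ p + ind p = FZ q + ind q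
    rw [hphi] at hkey
    have : ∀ a b x y : ZMod 2, a + b = x + y → a + x = b + y := by decide
    exact this _ _ _ _ hkey
  -- G constant along as
  have hGchain : ∀ (cs : List (ℤ × ℤ)) (hcs : cs ≠ []), cs.Chain' xstep →
      (∀ v ∈ cs, v ∈ as) →
      FZ (cs.head hcs) bs + indZ (s0.1 ≤ (cs.head hcs).1)
        = FZ (cs.getLast hcs) bs + indZ (s0.1 ≤ (cs.getLast hcs).1) := by
    intro cs
    induction cs with
    | nil => intro hcs; simp at hcs
    | cons x t ih =>
      intro hcs hch hmem
      cases t with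
      | nil => simp
      | cons y t' =>
        have htne : (y :: t' : List (ℤ × ℤ)) ≠ [] := by simp
        have hxy : xstep x y := (List.isChain_cons.mp hch).1 y (by simp)
        have h1 := hGstep x y (hmem x (by simp)) (hmem y (by simp)) hxy
        have h2 := ih htne ((List.isChain_cons.mp hch).2)
          (fun v hv => hmem v (List.mem_cons_of_mem _ hv))
        rw [List.getLast_cons htne]
        calc FZ ((x :: y :: t').head hcs) bs + indZ (s0.1 ≤ ((x :: y :: t').head hcs).1)
            = FZ x bs + indZ (s0.1 ≤ x.1) := rfl
          _ = FZ y bs + indZ (s0.1 ≤ y.1) := h1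
          _ = _ := h2
  have hmain := hGchain as ha hca (fun v hv => hv)
  -- compute the two ends
  have hF0 : FZ (as.head ha) bs = 0 := by
    apply FZ_eq_zero
    intro z hz
    obtain ⟨hz1, hz2, _⟩ := zip_tail_mem hz hcb
    apply indZ_of_not
    rintro ⟨h1, -⟩
    have := hxlow z.1 hz1
    have := hxlow z.2 hz2
    omega
  have hFt : FZ (as.getLast ha) bs = 0 := by
    set t0 := as.getLast ha with ht0
    apply FZ_eq_zero
    intro z hz
    obtain ⟨hz1, hz2, hzs⟩ := zip_tail_mem hz hcb
    apply indZ_of_not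
    rintro ⟨h1, h2⟩
    -- z is a step of bs crossing below t0, with t0.2 ∈ {0,1}: impossible
    have hp1 := hpb z.1 hz1
    have hp2 := hpb z.2 hz2
    have hpt : (t0.1 + t0.2) % 2 = c := hpa t0 (List.getLast_mem ha)
    have hy1 := hyb z.1 hz1
    have hy2 := hyb z.2 hz2
    have hne1 : z.1 ≠ t0 := fun h => hdisj t0 (List.getLast_mem ha) z.1 hz1 h.symm
    have hne2 : z.2 ≠ t0 := fun h => hdisj t0 (List.getLast_mem ha) z.2 hz2 h.symm
    rw [xstep_iff] at hzs
    have h3 := hzs.1; have h4 := hzs.2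
    rw [abs_eq (by norm_num : (0:ℤ) ≤ 1)] at h3 h4
    have hne1' : ¬(z.1.1 = t0.1) ∨ ¬(z.1.2 = t0.2) := by
      rcases Decidable.em (z.1.1 = t0.1) with h | h
      · right; intro h2'; exact hne1 (Prod.ext h h2')
      · left; exact h
    have hne2' : ¬(z.2.1 = t0.1) ∨ ¬(z.2.2 = t0.2) := by
      rcases Decidable.em (z.2.1 = t0.1) with h | h
      · right; intro h2'; exact hne2 (Prod.ext h h2')
      · left; exact h
    omega
  rw [hF0, hFt, zero_add, zero_add] at hmain
  have hend1 : indZ (s0.1 ≤ (as.head ha).1) = 0 := by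
    apply indZ_of_not
    have := hxlow s0 (List.head_mem hb)
    omega
  have hend2 : indZ (s0.1 ≤ (as.getLast ha).1) = 1 := indZ_of (le_of_lt hst)
  rw [hend1, hend2] at hmain
  exact absurd hmain (by decide)

-- ## chunk6 : the bottom zigzag and the unique bottom edge

def cOf (i : ℕ) : ℤ := if i = 1 then 0 else 1

lemma cOf_mem (i : ℕ) : cOf i = 0 ∨ cOf i = 1 := by
  unfold cOf; split <;> simp

lemma par_bridge (i : ℕ) (hi : i = 1 ∨ i = 2) (p : ℤ × ℤ) :
    HammockPar i p ↔ (p.1 + p.2) % 2 = cOf i := by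
  rcases hi with rfl | rfl
  · simp [HammockPar, cOf, Int.even_iff]
  · simp [HammockPar, cOf, Int.odd_iff]

def zbp (c x : ℤ) : ℤ × ℤ := (x, (x + c) % 2)

@[simp] lemma zbp_fst (c x : ℤ) : (zbp c x).1 = x := rfl
@[simp] lemma zbp_snd (c x : ℤ) : (zbp c x).2 = (x + c) % 2 := rfl

lemma zbp_mem_V {i l w : ℕ} (hi : i = 1 ∨ i = 2) (hw : 0 < w) {x : ℤ}
    (h0 : 0 ≤ x) (h1 : x ≤ (l : ℤ)) : zbp (cOf i) x ∈ HammockV i l w := by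
  have hc := cOf_mem i
  refine ⟨⟨by simpa using h0, by simpa using h1, ?_, ?_⟩, ?_⟩
  · simp only [zbp_snd]; omega
  · simp only [zbp_snd]; omega
  · rw [par_bridge i hi]; simp only [zbp_fst, zbp_snd]; omega

lemma fedge_mem_E {i l w : ℕ} (hi : i = 1 ∨ i = 2) (hw : 0 < w) {k : ℤ}
    (h0 : 0 ≤ k) (h1 : k + 1 ≤ (l : ℤ)) :
    s(zbp (cOf i) k, zbp (cOf i) (k + 1)) ∈ HammockE i l w := by
  have hc := cOf_mem i
  have hv1 := zbp_mem_V (l := l) (w := w) hi hw h0 (by omega)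
  have hv2 := zbp_mem_V (l := l) (w := w) hi hw (show (0:ℤ) ≤ k + 1 by omega) h1
  rw [edge_mem_E_iff]
  refine ⟨hv1.1, hv2.1, ?_, ?_, hv1.2, hv2.2⟩
  · simp only [zbp_fst]; rw [abs_eq (by norm_num : (0:ℤ) ≤ 1)]; omega
  · simp only [zbp_snd]; rw [abs_eq (by norm_num : (0:ℤ) ≤ 1)]; omega

lemma classify_aux {i l w : ℕ} (hi : i = 1 ∨ i = 2) {a b : ℤ × ℤ}
    (he : s(a, b) ∈ HammockE i l w) (ha2 : a.2 = 0) :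
    ∃ k : ℤ, 0 ≤ k ∧ k + 1 ≤ (l : ℤ) ∧ s(a, b) = s(zbp (cOf i) k, zbp (cOf i) (k + 1)) := by
  have hc := cOf_mem i
  obtain ⟨hva, hvb, hd1, hd2, hpa, hpb⟩ := (edge_mem_E_iff i l w a b).mp he
  rw [par_bridge i hi] at hpa hpb
  rw [abs_eq (by norm_num : (0:ℤ) ≤ 1)] at hd1 hd2
  obtain ⟨ha0, hal, _, _⟩ := hva
  obtain ⟨hb0, hbl, hb2, _⟩ := hvb
  have hb2' : b.2 = 1 := by omega
  have haz : a = zbp (cOf i) a.1 :=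
    Prod.ext_iff.mpr ⟨rfl, by simp only [zbp_snd]; omega⟩
  have hbz : b = zbp (cOf i) b.1 :=
    Prod.ext_iff.mpr ⟨rfl, by simp only [zbp_snd]; omega⟩
  rcases hd1 with h | h
  · -- a.1 = b.1 + 1 : k = b.1
    refine ⟨b.1, by omega, by omega, ?_⟩
    rw [show b.1 + 1 = a.1 by omega, ← haz, ← hbz, Sym2.eq_swap]
  · -- a.1 = b.1 - 1 : k = a.1
    refine ⟨a.1, by omega, by omega, ?_⟩
    rw [show a.1 + 1 = b.1 by omega, ← haz, ← hbz]

lemma classify_bottom {i l w : ℕ} (hi : i = 1 ∨ i = 2) {e : Sym2 (ℤ × ℤ)}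
    (he : e ∈ HammockE i l w) {p : ℤ × ℤ} (hp : p ∈ e) (hp2 : p.2 = 0) :
    ∃ k : ℤ, 0 ≤ k ∧ k + 1 ≤ (l : ℤ) ∧ e = s(zbp (cOf i) k, zbp (cOf i) (k + 1)) := by
  induction e using Sym2.ind with
  | _ a b =>
    rcases Sym2.mem_iff.mp hp with rfl | rfl
    · exact classify_aux hi he hp2
    · rw [Sym2.eq_swap] at he ⊢
      exact classify_aux hi he hp2

section BottomMain

variable {i l w : ℕ} {S : Set (Sym2 (ℤ × ℤ))}

lemma propA (hi : i = 1 ∨ i = 2) (hw : 0 < w) :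
    ∀ m : ℕ, (m : ℤ) ≤ (l : ℤ) →
      (∀ k : ℕ, (k : ℤ) + 1 ≤ (l : ℤ) → (k : ℤ) < (m : ℤ) →
        s(zbp (cOf i) k, zbp (cOf i) ((k : ℤ) + 1)) ∉ S) →
      InA i l w S (zbp (cOf i) m) := by
  intro m
  induction m with
  | zero =>
    intro _ _
    apply InA_src
    exact ⟨zbp_mem_V hi hw (by norm_num) (by positivity), rfl⟩
  | succ n ih =>
    intro hm hfree
    have hn : (n : ℤ) ≤ (l : ℤ) := by push_cast at hm ⊢; omega
    have hA := ih hn (fun k hk hkm => hfree k hk (by push_cast at hkm ⊢; omega))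
    have hedge : s(zbp (cOf i) n, zbp (cOf i) ((n : ℤ) + 1)) ∈ HammockE i l w \ S := by
      refine ⟨fedge_mem_E hi hw (by positivity) (by push_cast at hm ⊢; omega), ?_⟩
      exact hfree n (by push_cast at hm ⊢; omega) (by push_cast; omega)
    have := InA_extend hA hedge
    have hcast : ((n : ℤ) + 1) = ((n + 1 : ℕ) : ℤ) := by push_cast; ring
    rwa [hcast] at this

lemma propB (hi : i = 1 ∨ i = 2) (hw : 0 < w) (n : ℕ)
    (hB : InB i l w S (zbp (cOf i) n)) :
    ∀ d : ℕ, ((n + d : ℕ) : ℤ) ≤ (l : ℤ) →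
      (∀ j : ℕ, n ≤ j → j < n + d →
        s(zbp (cOf i) j, zbp (cOf i) ((j : ℤ) + 1)) ∉ S) →
      InB i l w S (zbp (cOf i) ((n + d : ℕ) : ℤ)) := by
  intro d
  induction d with
  | zero => intro _ _; simpa using hB
  | succ m ih =>
    intro hle hfree
    have h1 : ((n + m : ℕ) : ℤ) ≤ (l : ℤ) := by push_cast at hle ⊢; omega
    have hBm := ih h1 (fun j hj hjm => hfree j hj (by omega))
    have hedge : s(zbp (cOf i) ((n + m : ℕ) : ℤ), zbp (cOf i) (((n + m : ℕ) : ℤ) + 1))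
        ∈ HammockE i l w \ S := by
      refine ⟨fedge_mem_E hi hw (by positivity) (by push_cast at hle ⊢; omega), ?_⟩
      exact hfree (n + m) (by omega) (by omega)
    have hedge' : s(zbp (cOf i) (((n + m : ℕ) : ℤ) + 1), zbp (cOf i) ((n + m : ℕ) : ℤ))
        ∈ HammockE i l w \ S := by rw [Sym2.eq_swap]; exact hedge
    have hstep := InB_extend hBm hedge'
    have hcast : (((n + m : ℕ) : ℤ) + 1) = ((n + (m + 1) : ℕ) : ℤ) := by push_cast; ring
    rwa [hcast] at hstep

end BottomMain

-- ## chunk7 : the bottom theorem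

theorem bottom_unique (l w : ℕ) (hl : 0 < l) (hw : 0 < w)
    (i : ℕ) (hi : i = 1 ∨ i = 2) (S : Set (Sym2 (ℤ × ℤ)))
    (hS : (hammock i l w).IsMincut S) :
    ∃! e : Sym2 (ℤ × ℤ), e ∈ S ∧ ∃ p ∈ e, p.2 = (0 : ℤ) := by
  have hc := cOf_mem i
  set c := cOf i with hcdef
  have hSE : S ⊆ HammockE i l w := hS.1.1
  have hcut : ¬ (hammock i l w).IsPathset (HammockE i l w \ S) := hS.1.2
  have hex : ∃ k : ℕ, ((k : ℤ) + 1 ≤ (l : ℤ) ∧ s(zbp c k, zbp c ((k : ℤ) + 1)) ∈ S) := by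
    by_contra hno
    push_neg at hno
    have hAl := propA hi hw l le_rfl (fun k hk _ => hno k hk)
    have hBl : InB i l w S (zbp c l) :=
      InB_tgt ⟨zbp_mem_V hi hw (by positivity) le_rfl, rfl⟩
    exact AB_disjoint hcut hAl hBl
  set k1 := Nat.find hex with hk1def
  have hk1 := Nat.find_spec hex
  have hAk1 : InA i l w S (zbp c k1) := by
    refine propA hi hw k1 (by have := hk1.1; omega) ?_
    intro k hkl hkm
    have hlt : k < k1 := by omega
    have := Nat.find_min hex hlt
    tauto
  have hBk1 : InB i l w S (zbp c ((k1 : ℤ) + 1)) := by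
    obtain ⟨x, y, hxy, hx, hy⟩ := span_of_mincut hS hk1.2
    rcases Sym2.eq_iff.mp hxy with ⟨h1, h2⟩ | ⟨h1, h2⟩
    · rw [h2]; exact hy
    · exact absurd (AB_disjoint hcut hAk1 (h1 ▸ hy)) not_false
  have huniq : ∀ k : ℕ, (k : ℤ) + 1 ≤ (l : ℤ) → s(zbp c k, zbp c ((k : ℤ) + 1)) ∈ S →
      k = k1 := by
    intro k hkl hkS
    by_contra hne
    have hk1le : k1 ≤ k := Nat.find_min' hex ⟨hkl, hkS⟩
    have hklt : k1 < k := lt_of_le_of_ne hk1le (Ne.symm hne)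
    have hex2 : ∃ m : ℕ, k1 < m ∧ (m : ℤ) + 1 ≤ (l : ℤ) ∧
        s(zbp c m, zbp c ((m : ℤ) + 1)) ∈ S := ⟨k, hklt, hkl, hkS⟩
    set k2 := Nat.find hex2 with hk2def
    have hk2 := Nat.find_spec hex2
    have hBk2 : InB i l w S (zbp c (k2 : ℤ)) := by
      have hcast1 : ((k1 : ℤ) + 1) = ((k1 + 1 : ℕ) : ℤ) := by push_cast; ring
      rw [hcast1] at hBk1
      have hres := propB hi hw (k1 + 1) hBk1 (k2 - (k1 + 1))
        (by have := hk2.2.1; have := hk2.1; push_cast; omega)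
        (by
          intro j hj hjlt
          intro hjS
          have hjk2 : j < k2 := by omega
          exact Nat.find_min hex2 hjk2 ⟨by omega, by have := hk2.2.1; push_cast; omega, hjS⟩)
      have : k1 + 1 + (k2 - (k1 + 1)) = k2 := by omega
      rwa [this] at hres
    have hAk2 : InA i l w S (zbp c ((k2 : ℤ) + 1)) := by
      obtain ⟨x, y, hxy, hx, hy⟩ := span_of_mincut hS hk2.2.2
      rcases Sym2.eq_iff.mp hxy with ⟨h1, h2⟩ | ⟨h1, h2⟩
      · exact absurd (AB_disjoint hcut (h1 ▸ hx) hBk2) not_false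
      · rw [h2]; exact hx
    obtain ⟨as, hane, hca, hahd, halast, haall⟩ := walk_all_InA' hAk2
    obtain ⟨bs, hbne, hcb, hbhd, hblast, hball⟩ := walk_all_InB' hBk1
    refine jordan c as bs hane hbne hca hcb ?_ ?_ ?_ ?_ ?_ ?_ ?_ ?_ ?_ ?_
    · exact fun v hv => (par_bridge i hi v).mp (InA_mem_V (haall v hv)).2
    · exact fun v hv => (par_bridge i hi v).mp (InB_mem_V (hball v hv)).2
    · exact fun v hv => (InA_mem_V (haall v hv)).1.2.2.1
    · exact fun v hv => (InB_mem_V (hball v hv)).1.2.2.1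
    · intro v hv u hu h
      exact AB_disjoint hcut (h ▸ haall v hv) (hball u hu)
    · intro u hu
      rw [hahd.2]
      have hV := InB_mem_V (hball u hu)
      rcases (hV.1.1).lt_or_eq with h | h
      · exact h
      · exfalso
        exact AB_disjoint hcut (InA_src ⟨hV, h.symm⟩) (hball u hu)
    · intro v hv
      rw [hblast.2]
      have hV := InA_mem_V (haall v hv)
      rcases (hV.1.2.1).lt_or_eq with h | h
      · exact h
      · exfalso
        exact AB_disjoint hcut (haall v hv) (InB_tgt ⟨hV, h⟩)
    · rw [hbhd]; simp only [zbp_snd]; omega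
    · rw [halast]; simp only [zbp_snd]; omega
    · rw [hbhd, halast]
      simp only [zbp_fst]
      push_cast
      omega
  refine ⟨s(zbp c k1, zbp c ((k1 : ℤ) + 1)), ⟨hk1.2, ?_⟩, ?_⟩
  · by_cases h : ((k1 : ℤ) + c) % 2 = 0
    · exact ⟨zbp c k1, Sym2.mem_mk_left _ _, by simpa using h⟩
    · refine ⟨zbp c ((k1 : ℤ) + 1), Sym2.mem_mk_right _ _, ?_⟩
      simp only [zbp_snd]; omega
  · rintro e' ⟨he'S, p, hpe', hp2⟩
    obtain ⟨m, hm0, hml, rfl⟩ := classify_bottom hi (hSE he'S) hpe' hp2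
    have hkn : m = ((m.toNat : ℕ) : ℤ) := by omega
    rw [hkn] at he'S ⊢
    have heq : m.toNat = k1 := huniq m.toNat (by omega) he'S
    rw [heq]

-- ## chunk8 : reflection symmetry y ↦ w - y

def yRefl (w : ℕ) (p : ℤ × ℤ) : ℤ × ℤ := ((p.1 : ℤ), (w : ℤ) - p.2)

def yReflE (w : ℕ) : Sym2 (ℤ × ℤ) → Sym2 (ℤ × ℤ) := Sym2.map (yRefl w)

def iRefl (i w : ℕ) : ℕ := if w % 2 = 0 then i else otherKind i

@[simp] lemma yRefl_fst (w : ℕ) (p : ℤ × ℤ) : (yRefl w p).1 = p.1 := rfl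
@[simp] lemma yRefl_snd (w : ℕ) (p : ℤ × ℤ) : (yRefl w p).2 = (w : ℤ) - p.2 := rfl

@[simp] lemma yRefl_invol (w : ℕ) (p : ℤ × ℤ) : yRefl w (yRefl w p) = p := by
  apply Prod.ext_iff.mpr
  constructor <;> simp

lemma yRefl_inj (w : ℕ) : Function.Injective (yRefl w) := by
  intro x y h
  rw [← yRefl_invol w x, h, yRefl_invol]

@[simp] lemma yReflE_invol (w : ℕ) (e : Sym2 (ℤ × ℤ)) : yReflE w (yReflE w e) = e := by
  induction e using Sym2.ind with
  | _ a b => simp [yReflE, Sym2.map_pair_eq]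

lemma yReflE_inj (w : ℕ) : Function.Injective (yReflE w) := by
  intro x y h
  rw [← yReflE_invol w x, h, yReflE_invol]

lemma yReflE_image_image (w : ℕ) (T : Set (Sym2 (ℤ × ℤ))) :
    yReflE w '' (yReflE w '' T) = T := by
  ext x
  constructor
  · rintro ⟨y, ⟨z, hz, rfl⟩, rfl⟩
    rwa [yReflE_invol]
  · intro hx
    exact ⟨yReflE w x, ⟨x, hx, rfl⟩, yReflE_invol w x⟩

lemma iRefl_mem {i : ℕ} (w : ℕ) (hi : i = 1 ∨ i = 2) : iRefl i w = 1 ∨ iRefl i w = 2 := by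
  rcases hi with rfl | rfl <;> unfold iRefl otherKind <;> split <;> simp

lemma iRefl_invol {i : ℕ} (w : ℕ) (hi : i = 1 ∨ i = 2) : iRefl (iRefl i w) w = i := by
  rcases hi with rfl | rfl <;> unfold iRefl otherKind <;> split <;> simp

lemma cOf_iRefl {i : ℕ} (w : ℕ) (hi : i = 1 ∨ i = 2) :
    cOf (iRefl i w) = (cOf i + (w : ℤ)) % 2 := by
  rcases hi with rfl | rfl <;> by_cases hw2 : w % 2 = 0 <;>
    simp only [iRefl, otherKind, cOf, hw2, if_true, if_false, reduceIte] <;>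
    norm_num <;> omega

lemma par_refl {i : ℕ} (w : ℕ) (hi : i = 1 ∨ i = 2) (p : ℤ × ℤ) :
    HammockPar i p ↔ HammockPar (iRefl i w) (yRefl w p) := by
  rw [par_bridge i hi, par_bridge _ (iRefl_mem w hi), cOf_iRefl w hi]
  have hc := cOf_mem i
  simp only [yRefl_fst, yRefl_snd]
  omega

lemma VAll_refl {l w : ℕ} (p : ℤ × ℤ) :
    p ∈ HammockVAll l w ↔ yRefl w p ∈ HammockVAll l w := by
  simp only [HammockVAll, Set.mem_setOf_eq, yRefl_fst, yRefl_snd]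
  omega

lemma V_refl {i l w : ℕ} (hi : i = 1 ∨ i = 2) (p : ℤ × ℤ) :
    p ∈ HammockV i l w ↔ yRefl w p ∈ HammockV (iRefl i w) l w := by
  unfold HammockV
  simp only [Set.mem_setOf_eq]
  rw [← VAll_refl, ← par_refl w hi]

lemma E_refl {i l w : ℕ} (hi : i = 1 ∨ i = 2) (e : Sym2 (ℤ × ℤ)) :
    e ∈ HammockE i l w ↔ yReflE w e ∈ HammockE (iRefl i w) l w := by
  induction e using Sym2.ind with
  | _ a b =>
    rw [yReflE, Sym2.map_pair_eq, edge_mem_E_iff, edge_mem_E_iff]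
    have habs : |(yRefl w a).2 - (yRefl w b).2| = |a.2 - b.2| := by
      simp only [yRefl_snd]
      rw [show (w : ℤ) - a.2 - ((w : ℤ) - b.2) = -(a.2 - b.2) by ring, abs_neg]
    rw [← VAll_refl, ← VAll_refl, ← par_refl w hi, ← par_refl w hi, habs]
    simp only [yRefl_fst]

lemma xstep_refl (w : ℕ) {a b : ℤ × ℤ} (h : xstep a b) : xstep (yRefl w a) (yRefl w b) := by
  rw [xstep_iff] at h ⊢
  simp only [yRefl_fst, yRefl_snd]
  refine ⟨h.1, ?_⟩
  rw [show (w : ℤ) - b.2 - ((w : ℤ) - a.2) = -(b.2 - a.2) by ring, abs_neg]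
  exact h.2

lemma xEdges_map (f : ℤ × ℤ → ℤ × ℤ) (vs : List (ℤ × ℤ)) :
    xEdges (vs.map f) = (xEdges vs).map (Sym2.map f) := by
  induction vs with
  | nil => simp
  | cons v rest ih =>
    cases rest with
    | nil => simp
    | cons u t =>
      simp only [List.map_cons, xEdges_cons_cons, List.map_cons] at ih ⊢
      rw [← List.map_cons (f := f) (a := u) (l := t)] at ih ⊢
      rw [ih, Sym2.map_pair_eq]

lemma src_refl {i l w : ℕ} (hi : i = 1 ∨ i = 2) (p : ℤ × ℤ) :
    p ∈ (hammock i l w).src ↔ yRefl w p ∈ (hammock (iRefl i w) l w).src := by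
  show (p ∈ HammockV i l w ∧ p.1 = 0) ↔ _
  rw [V_refl hi]
  rfl

lemma tgt_refl {i l w : ℕ} (hi : i = 1 ∨ i = 2) (p : ℤ × ℤ) :
    p ∈ (hammock i l w).tgt ↔ yRefl w p ∈ (hammock (iRefl i w) l w).tgt := by
  show (p ∈ HammockV i l w ∧ p.1 = (l : ℤ)) ↔ _
  rw [V_refl hi]
  rfl

lemma pathset_refl {i l w : ℕ} (hi : i = 1 ∨ i = 2) {P : Set (Sym2 (ℤ × ℤ))}
    (h : (hammock i l w).IsPathset P) :
    (hammock (iRefl i w) l w).IsPathset (yReflE w '' P) := by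
  obtain ⟨hsub, vs, hne, ⟨hnd, hch⟩, hhd, hlast, hedges⟩ := h
  have hmne : vs.map (yRefl w) ≠ [] := by simpa using hne
  refine ⟨?_, vs.map (yRefl w), hmne, ⟨?_, ?_⟩, ?_, ?_, ?_⟩
  · rintro e' ⟨e, he, rfl⟩
    exact (E_refl hi e).mp (hsub he)
  · exact hnd.map (yRefl_inj w)
  · exact List.isChain_map_of_isChain _ (fun a b hab => xstep_refl w hab) hch
  · have h1 : (vs.map (yRefl w)).head? = Option.map (yRefl w) vs.head? := List.head?_map
    rw [List.head?_eq_head hmne, List.head?_eq_head hne] at h1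
    simp only [Option.map_some, Option.some.injEq] at h1
    rw [h1]
    exact (src_refl hi _).mp hhd
  · have h1 : (vs.map (yRefl w)).getLast? = Option.map (yRefl w) vs.getLast? :=
      List.getLast?_map
    rw [List.getLast?_eq_getLast hmne, List.getLast?_eq_getLast hne] at h1
    simp only [Option.map_some, Option.some.injEq] at h1
    rw [h1]
    exact (tgt_refl hi _).mp hlast
  · intro e he
    rw [xEdges_map] at he
    obtain ⟨e0, he0, rfl⟩ := List.mem_map.mp he
    exact ⟨e0, hedges e0 he0, rfl⟩

lemma E_image_refl {i l w : ℕ} (hi : i = 1 ∨ i = 2) :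
    yReflE w '' HammockE i l w = HammockE (iRefl i w) l w := by
  ext e'
  constructor
  · rintro ⟨e, he, rfl⟩
    exact (E_refl hi e).mp he
  · intro he'
    refine ⟨yReflE w e', ?_, yReflE_invol w e'⟩
    have := (E_refl (iRefl_mem w hi) e').mp he'
    rwa [iRefl_invol w hi] at this

lemma cutset_refl {i l w : ℕ} (hi : i = 1 ∨ i = 2) {S : Set (Sym2 (ℤ × ℤ))}
    (h : (hammock i l w).IsCutset S) :
    (hammock (iRefl i w) l w).IsCutset (yReflE w '' S) := by
  obtain ⟨hsub, hnp⟩ := h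
  constructor
  · rintro e' ⟨e, he, rfl⟩
    exact (E_refl hi e).mp (hsub he)
  · intro hps
    apply hnp
    have h2 := pathset_refl (iRefl_mem w hi) hps
    rw [iRefl_invol w hi] at h2
    have heq : yReflE w '' ((hammock (iRefl i w) l w).edges \ yReflE w '' S)
        = (hammock i l w).edges \ S := by
      show yReflE w '' (HammockE (iRefl i w) l w \ yReflE w '' S) = HammockE i l w \ S
      rw [Set.image_diff (yReflE_inj w), yReflE_image_image, ← E_image_refl hi,
        yReflE_image_image]
    rwa [heq] at h2

lemma mincut_refl {i l w : ℕ} (hi : i = 1 ∨ i = 2) {S : Set (Sym2 (ℤ × ℤ))}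
    (h : (hammock i l w).IsMincut S) :
    (hammock (iRefl i w) l w).IsMincut (yReflE w '' S) := by
  obtain ⟨hcut, hmin⟩ := h
  refine ⟨cutset_refl hi hcut, ?_⟩
  intro D hD hDcut
  have hD' : yReflE w '' D ⊂ S := by
    constructor
    · rintro e' ⟨e, he, rfl⟩
      obtain ⟨z, hz, hze⟩ := hD.1 he
      rw [← hze, yReflE_invol]
      exact hz
    · intro hsub
      apply hD.2
      rintro x ⟨z, hz, rfl⟩
      obtain ⟨d, hd, hdz⟩ := hsub hz
      rw [← hdz, yReflE_invol]
      exact hd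
  have h2 := cutset_refl (iRefl_mem w hi) hDcut
  rw [iRefl_invol w hi] at h2
  exact hmin _ hD' h2

-- ## chunk9 : the main theorem

/-- Every mincut Σ of H^{(i)}_{l,w} contains exactly one edge having
an endpoint on the line y = 0, and exactly one edge having an endpoint on the
line y = w. -/
theorem mincut_unique_boundary_edges (l w : ℕ) (hl : 0 < l) (hw : 0 < w)
    (i : ℕ) (hi : i = 1 ∨ i = 2) (S : Set (Sym2 (ℤ × ℤ)))
    (hS : (hammock i l w).IsMincut S) :
    (∃! e : Sym2 (ℤ × ℤ), e ∈ S ∧ ∃ p ∈ e, p.2 = (0 : ℤ)) ∧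
    (∃! e : Sym2 (ℤ × ℤ), e ∈ S ∧ ∃ p ∈ e, p.2 = (w : ℤ)) := by
  constructor
  · exact bottom_unique l w hl hw i hi S hS
  · have hi' := iRefl_mem w hi
    have hS' := mincut_refl hi hS
    obtain ⟨e0', he0, huniq'⟩ := bottom_unique l w hl hw (iRefl i w) hi' _ hS'
    have corr : ∀ e : Sym2 (ℤ × ℤ), (e ∈ S ∧ ∃ p ∈ e, p.2 = (w : ℤ)) ↔
        (yReflE w e ∈ yReflE w '' S ∧ ∃ q ∈ yReflE w e, q.2 = (0 : ℤ)) := by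
      intro e
      constructor
      · rintro ⟨heS, p, hpe, hp2⟩
        refine ⟨⟨e, heS, rfl⟩, yRefl w p, Sym2.mem_map.mpr ⟨p, hpe, rfl⟩, ?_⟩
        simp [hp2]
      · rintro ⟨⟨z, hz, hze⟩, q, hqe, hq2⟩
        have hez : z = e := yReflE_inj w hze
        subst hez
        obtain ⟨p, hpe, hpq⟩ := Sym2.mem_map.mp hqe
        refine ⟨hz, p, hpe, ?_⟩
        rw [← hpq] at hq2
        simp only [yRefl_snd] at hq2
        omega
    refine ⟨yReflE w e0', (corr _).mpr ⟨by rw [yReflE_invol]; exact he0.1, ?_⟩, ?_⟩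
    · rw [yReflE_invol]
      exact he0.2
    · intro e1 h1
      have h2 := huniq' (yReflE w e1) ((corr e1).mp h1)
      calc e1 = yReflE w (yReflE w e1) := (yReflE_invol w e1).symm
        _ = yReflE w e0' := by rw [h2]
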